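/- Let w = (a_1,...,a_{2n}) ∈ S_{2n} satisfy a_i = 2n+1-a_{2n+1-i} for all i, and let m_w = #{i ≤ n : a_i > n}. Then the length of w as an element of the type-C Weyl group W_G (generated by s_i = r_i r_{2n-i} for 1 ≤ i ≤ n−1 and s_n = r_n, where r_j is the transposition (j,j+1) in S_{2n}) equals (ℓ_{S_{2n}}(w) + m_w)/2, where ℓ_{S_{2n}} is the Coxeter length in S_{2n}. -/

import Mathlib

open Equiv

/-- An element of `Fin (2*n)` from a natural number (taken mod `2*n`). -/
def fmk (n : ℕ) (hn : 0 < n) (i : ℕ) : Fin (2 * n) :=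
  ⟨i % (2 * n), Nat.mod_lt _ (by omega)⟩

/-- The transposition `r_j = (j, j+1)` of `S_{2n}`, `j` given in 1-based indexing. -/
def rr (n : ℕ) (hn : 0 < n) (j : ℕ) : Equiv.Perm (Fin (2 * n)) :=
  Equiv.swap (fmk n hn (j - 1)) (fmk n hn j)

/-- The Coxeter generators of `S_{2n}` (adjacent transpositions). -/
def genA (n : ℕ) (hn : 0 < n) : Set (Equiv.Perm (Fin (2 * n))) :=
  {p | ∃ j, 1 ≤ j ∧ j ≤ 2 * n - 1 ∧ p = rr n hn j}

/-- The type `C` simple reflections: `s_i = r_i r_{2n-i}` for `1 ≤ i ≤ n-1`, and `s_n = r_n`. -/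
def genC (n : ℕ) (hn : 0 < n) : Set (Equiv.Perm (Fin (2 * n))) :=
  {p | (∃ i, 1 ≤ i ∧ i ≤ n - 1 ∧ p = rr n hn i * rr n hn (2 * n - i)) ∨ p = rr n hn n}

/-- Minimal length of a word in a generating set `S` expressing `w`. -/
noncomputable def wordLength {G : Type*} [Group G] (S : Set G) (w : G) : ℕ :=
  sInf {l : ℕ | ∃ L : List G, L.length = l ∧ (∀ x ∈ L, x ∈ S) ∧ L.prod = w}


open Finset

theorem Equiv.Perm.apply_inv_self {α : Type*} (f : Perm α) (x : α) : f (f⁻¹ x) = x :=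
  f.apply_symm_apply x

theorem Equiv.Perm.inv_apply_self {α : Type*} (f : Perm α) (x : α) : f⁻¹ (f x) = x :=
  f.symm_apply_apply x

variable {M : ℕ}

def invSet (w : Perm (Fin M)) : Finset (Fin M × Fin M) :=
  Finset.univ.filter fun p => p.1 < p.2 ∧ w p.2 < w p.1

def invN (w : Perm (Fin M)) : ℕ := (invSet w).card

lemma swap_lt_swap_iff {a b : Fin M} (hab : (b:ℕ) = (a:ℕ)+1) (x y : Fin M) :
    Equiv.swap a b y < Equiv.swap a b x ↔
      (y < x ∧ ¬(x = a ∧ y = b) ∧ ¬(x = b ∧ y = a)) ∨ (x = a ∧ y = b) := by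
  simp only [Equiv.swap_apply_def]
  split_ifs <;>
    simp only [Fin.lt_def, Fin.ext_iff, not_and, not_or] at * <;> omega

lemma invSet_swap_mul {a b : Fin M} (hab : (b:ℕ) = (a:ℕ)+1) (w : Perm (Fin M))
    (h : w⁻¹ a < w⁻¹ b) :
    invSet (Equiv.swap a b * w) = insert (w⁻¹ a, w⁻¹ b) (invSet w) := by
  ext ⟨i, j⟩
  simp only [invSet, Finset.mem_filter, Finset.mem_univ, true_and, Finset.mem_insert,
    Prod.mk.injEq]
  simp only [Equiv.Perm.mul_apply]
  rw [swap_lt_swap_iff hab]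
  constructor
  · rintro ⟨hij, hC⟩
    rcases hC with ⟨hyx, _, _⟩ | ⟨hxa, hyb⟩
    · exact Or.inr ⟨hij, hyx⟩
    · left
      refine ⟨?_, ?_⟩
      · rw [← hxa]; simp
      · rw [← hyb]; simp
  · rintro (⟨hi, hj⟩ | ⟨hij, hji⟩)
    · subst hi; subst hj
      exact ⟨h, Or.inr ⟨by simp, by simp⟩⟩
    · refine ⟨hij, Or.inl ⟨hji, ?_, ?_⟩⟩
      · rintro ⟨h1, h2⟩
        rw [h1, h2] at hji
        rw [Fin.lt_def] at hji; omega
      · rintro ⟨h1, h2⟩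
        have hi' : i = w⁻¹ b := by rw [← h1]; simp
        have hj' : j = w⁻¹ a := by rw [← h2]; simp
        rw [hi', hj'] at hij
        exact absurd hij (not_lt.mpr h.le)

lemma invN_swap_mul_inc {a b : Fin M} (hab : (b:ℕ) = (a:ℕ)+1) (w : Perm (Fin M))
    (h : w⁻¹ a < w⁻¹ b) :
    invN (Equiv.swap a b * w) = invN w + 1 := by
  rw [invN, invSet_swap_mul hab w h, Finset.card_insert_of_notMem, invN]
  simp only [invSet, Finset.mem_filter, Finset.mem_univ, true_and, not_and]
  intro _
  simp only [Equiv.Perm.apply_inv_self, Fin.lt_def, not_lt]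
  omega

lemma invN_swap_mul_dec {a b : Fin M} (hab : (b:ℕ) = (a:ℕ)+1) (w : Perm (Fin M))
    (h : w⁻¹ b < w⁻¹ a) :
    invN w = invN (Equiv.swap a b * w) + 1 := by
  have hne : a ≠ b := by simp only [ne_eq, Fin.ext_iff]; omega
  have key := invN_swap_mul_inc hab (Equiv.swap a b * w) ?_
  · rwa [← mul_assoc, Equiv.swap_mul_self, one_mul] at key
  · simp only [mul_inv_rev, Equiv.Perm.mul_apply]
    rw [Equiv.swap_inv]
    rwa [Equiv.swap_apply_left, Equiv.swap_apply_right]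

lemma invN_swap_mul_le {a b : Fin M} (hab : (b:ℕ) = (a:ℕ)+1) (w : Perm (Fin M)) :
    invN (Equiv.swap a b * w) ≤ invN w + 1 := by
  rcases lt_or_ge (w⁻¹ a) (w⁻¹ b) with h | h
  · rw [invN_swap_mul_inc hab w h]
  · have hne : w⁻¹ b ≠ w⁻¹ a := by
      simp only [ne_eq, EmbeddingLike.apply_eq_iff_eq]
      simp only [ne_eq, Fin.ext_iff]; omega
    have := invN_swap_mul_dec hab w (lt_of_le_of_ne h hne)
    omega

lemma invN_one : invN (1 : Perm (Fin M)) = 0 := by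
  rw [invN, Finset.card_eq_zero, invSet]
  ext ⟨i, j⟩
  simp only [Finset.mem_filter, Finset.mem_univ, true_and, Finset.notMem_empty, iff_false,
    not_and]
  simp only [Equiv.Perm.one_apply]
  intro h; exact not_lt.mpr h.le

lemma strictMono_of_adj (f : Fin M → Fin M)
    (h : ∀ k (hk : k + 1 < M), f ⟨k, by omega⟩ < f ⟨k+1, hk⟩) : StrictMono f := by
  have key : ∀ jv (hj : jv < M) (i : Fin M), (i : ℕ) < jv → f i < f ⟨jv, hj⟩ := by
    intro jv
    induction jv with
    | zero => intro _ i hi; omega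
    | succ k ih =>
      intro hj i hi
      rcases Nat.lt_or_ge (i : ℕ) k with h' | h'
      · exact lt_trans (ih (by omega) i h') (h k hj)
      · have : (i : ℕ) = k := by omega
        have : i = ⟨k, by omega⟩ := by simp [Fin.ext_iff, this]
        rw [this]; exact h k hj
  intro i j hij
  have := key (j : ℕ) j.isLt i hij
  simpa using this

lemma perm_strictMono_eq_one (w : Perm (Fin M)) (h : StrictMono w) : w = 1 := by
  have hinv : StrictMono (w⁻¹ : Perm (Fin M)) := by
    intro i j hij
    rcases lt_trichotomy (w⁻¹ i) (w⁻¹ j) with h' | h' | h'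
    · exact h'
    · exfalso
      have h'' : i = j := by
        have := congrArg w h'
        simpa using this
      rw [h''] at hij
      exact lt_irrefl _ hij
    · exfalso
      have := h h'
      simp only [Equiv.Perm.apply_inv_self] at this
      exact absurd hij (not_lt.mpr this.le)
  have le_ap : ∀ (f : Perm (Fin M)), StrictMono f → ∀ i : Fin M, (i : ℕ) ≤ (f i : ℕ) := by
    intro f hf
    have : ∀ k (hk : k < M), k ≤ (f ⟨k, hk⟩ : ℕ) := by
      intro k
      induction k with
      | zero => omega
      | succ m ih =>
        intro hk
        have h1 := ih (by omega)
        have h2 : f ⟨m, by omega⟩ < f ⟨m+1, hk⟩ := hf (by simp [Fin.lt_def])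
        rw [Fin.lt_def] at h2; omega
    intro i
    have := this (i : ℕ) i.isLt
    simpa using this
  ext i
  have h1 := le_ap w h i
  have h2 := le_ap w⁻¹ hinv (w i)
  simp only [Equiv.Perm.inv_apply_self] at h2
  simp only [Equiv.Perm.one_apply]
  omega

lemma exists_descent (w : Perm (Fin M)) (hw : w ≠ 1) :
    ∃ k, ∃ (hk : k + 1 < M), w⁻¹ ⟨k+1, hk⟩ < w⁻¹ ⟨k, by omega⟩ := by
  by_contra hc
  push_neg at hc
  apply hw
  have : StrictMono (w⁻¹ : Perm (Fin M)) := by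
    apply strictMono_of_adj
    intro k hk
    have := hc k hk
    have hne : w⁻¹ ⟨k+1, hk⟩ ≠ w⁻¹ ⟨k, by omega⟩ := by
      simp only [ne_eq, EmbeddingLike.apply_eq_iff_eq, Fin.ext_iff]; omega
    exact lt_of_le_of_ne this (Ne.symm hne)
  have := perm_strictMono_eq_one w⁻¹ this
  rw [← inv_inv w, this, inv_one]

lemma invN_eq_zero_iff (w : Perm (Fin M)) : invN w = 0 ↔ w = 1 := by
  constructor
  · intro h
    by_contra hw
    obtain ⟨k, hk, hd⟩ := exists_descent w hw
    have := invN_swap_mul_dec (a := ⟨k, by omega⟩) (b := ⟨k+1, hk⟩) rfl w hd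
    omega
  · rintro rfl; exact invN_one

section A
variable (n : ℕ) (hn : 0 < n)

lemma fmk_val (i : ℕ) (h : i < 2*n) : ((fmk n hn i : Fin (2*n)) : ℕ) = i := by
  simp [fmk, Nat.mod_eq_of_lt h]

lemma rr_eq (j : ℕ) (h1 : 1 ≤ j) (h2 : j ≤ 2*n - 1) :
    rr n hn j = Equiv.swap ⟨j-1, by omega⟩ ⟨j, by omega⟩ := by
  rw [rr]
  have e1 : fmk n hn (j-1) = (⟨j-1, by omega⟩ : Fin (2*n)) := by
    simp only [fmk, Fin.ext_iff]
    exact Nat.mod_eq_of_lt (by omega)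
  have e2 : fmk n hn j = (⟨j, by omega⟩ : Fin (2*n)) := by
    simp only [fmk, Fin.ext_iff]
    exact Nat.mod_eq_of_lt (by omega)
  rw [e1, e2]

lemma rr_sq (j : ℕ) (h1 : 1 ≤ j) (h2 : j ≤ 2*n - 1) :
    rr n hn j * rr n hn j = 1 := by
  rw [rr, Equiv.swap_mul_self]

lemma invN_rr_le (j : ℕ) (h1 : 1 ≤ j) (h2 : j ≤ 2*n - 1) (w : Perm (Fin (2*n))) :
    invN (rr n hn j * w) ≤ invN w + 1 := by
  rw [rr_eq n hn j h1 h2]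
  exact invN_swap_mul_le (by simp; omega) w

lemma A_lower : ∀ L : List (Perm (Fin (2*n))), (∀ x ∈ L, x ∈ genA n hn) →
    invN L.prod ≤ L.length := by
  intro L
  induction L with
  | nil => simp [invN_one]
  | cons s L ih =>
    intro hL
    obtain ⟨j, h1, h2, hs⟩ := hL s (by simp)
    have hrec := ih (fun x hx => hL x (by simp [hx]))
    rw [List.prod_cons, hs]
    have := invN_rr_le n hn j h1 h2 L.prod
    simp only [List.length_cons]
    omega

lemma A_upper : ∀ N : ℕ, ∀ w : Perm (Fin (2*n)), invN w = N →
    ∃ L : List (Perm (Fin (2*n))), (∀ x ∈ L, x ∈ genA n hn) ∧ L.prod = w ∧ L.length = invN w := by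
  intro N
  induction N using Nat.strong_induction_on with
  | _ N ih =>
    intro w hN
    rcases eq_or_ne w 1 with rfl | hw
    · exact ⟨[], by simp, by simp, by simp [invN_one]⟩
    · obtain ⟨k, hk, hd⟩ := exists_descent w hw
      set s := rr n hn (k+1) with hs
      have hseq : s = Equiv.swap ⟨k, by omega⟩ ⟨k+1, hk⟩ := by
        rw [hs, rr_eq n hn (k+1) (by omega) (by omega)]
        congr 1 <;> simp [Fin.ext_iff]
      have hdec : invN w = invN (s * w) + 1 := by
        rw [hseq]
        exact invN_swap_mul_dec rfl w hd
      obtain ⟨L', hL'1, hL'2, hL'3⟩ := ih (invN (s * w)) (by omega) (s * w) rfl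
      refine ⟨s :: L', ?_, ?_, ?_⟩
      · intro x hx
        rcases List.mem_cons.mp hx with rfl | hx'
        · exact ⟨k+1, by omega, by omega, rfl⟩
        · exact hL'1 x hx'
      · rw [List.prod_cons, hL'2, ← mul_assoc, rr_sq n hn (k+1) (by omega) (by omega), one_mul]
      · simp only [List.length_cons]; omega

lemma wordLength_eq_of {G : Type*} [Group G] (S : Set G) (w : G) (l0 : ℕ)
    (L : List G) (hmem : ∀ x ∈ L, x ∈ S) (hprod : L.prod = w) (hlen : L.length = l0)
    (hlb : ∀ L' : List G, (∀ x ∈ L', x ∈ S) → L'.prod = w → l0 ≤ L'.length) :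
    wordLength S w = l0 := by
  have hm1 : l0 ∈ {l : ℕ | ∃ L : List G, L.length = l ∧ (∀ x ∈ L, x ∈ S) ∧ L.prod = w} :=
    ⟨L, hlen, hmem, hprod⟩
  apply le_antisymm (Nat.sInf_le hm1)
  apply le_csInf ⟨l0, hm1⟩
  rintro b ⟨L', hl, hm, hp⟩
  rw [← hl]
  exact hlb L' hm hp

lemma wordLength_genA (w : Perm (Fin (2*n))) : wordLength (genA n hn) w = invN w := by
  obtain ⟨L, hL1, hL2, hL3⟩ := A_upper n hn (invN w) w rfl
  refine wordLength_eq_of _ _ _ L hL1 hL2 hL3 ?_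
  intro L' hm hp
  have := A_lower n hn L' hm
  rw [hp] at this
  omega

end A


section C

/-- Symmetry condition defining the type `C` Weyl group inside `S_{2n}`. -/
def PSymm {M : ℕ} (w : Perm (Fin M)) : Prop := ∀ i, w i = Fin.rev (w (Fin.rev i))

lemma PSymm.one {M : ℕ} : PSymm (1 : Perm (Fin M)) := by
  intro i; simp

lemma PSymm.mul {M : ℕ} {u v : Perm (Fin M)} (hu : PSymm u) (hv : PSymm v) :
    PSymm (u * v) := by
  intro x
  have h1 : v (Fin.rev x) = Fin.rev (v x) := by
    rw [hv (Fin.rev x), Fin.rev_rev]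
  simp only [Equiv.Perm.mul_apply, h1]
  rw [hu (v x)]

lemma PSymm.inv_rev {M : ℕ} {w : Perm (Fin M)} (hw : PSymm w) (x : Fin M) :
    w⁻¹ (Fin.rev x) = Fin.rev (w⁻¹ x) := by
  apply w.injective
  rw [Equiv.Perm.apply_inv_self, hw (Fin.rev (w⁻¹ x))]
  simp [Fin.rev_rev]

lemma rev_swap {M : ℕ} (a b x : Fin M) :
    Equiv.swap (Fin.rev a) (Fin.rev b) (Fin.rev x) = Fin.rev (Equiv.swap a b x) := by
  rcases eq_or_ne x a with rfl | hxa
  · simp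
  · rcases eq_or_ne x b with rfl | hxb
    · simp
    · rw [Equiv.swap_apply_of_ne_of_ne hxa hxb,
        Equiv.swap_apply_of_ne_of_ne (fun h => hxa (Fin.rev_injective h))
          (fun h => hxb (Fin.rev_injective h))]

lemma psymm_swap_rev {M : ℕ} (a : Fin M) : PSymm (Equiv.swap a (Fin.rev a)) := by
  intro x
  have h := rev_swap (Fin.rev a) a x
  rw [Fin.rev_rev, Equiv.swap_comm (Fin.rev a) a] at h
  rw [h, Fin.rev_rev]

lemma psymm_swap_pair {M : ℕ} (a b : Fin M)
    (hc : Commute (Equiv.swap a b) (Equiv.swap (Fin.rev a) (Fin.rev b))) :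
    PSymm (Equiv.swap a b * Equiv.swap (Fin.rev a) (Fin.rev b)) := by
  intro x
  set u := Equiv.swap a b
  set v := Equiv.swap (Fin.rev a) (Fin.rev b)
  have h1 : ∀ y, v (Fin.rev y) = Fin.rev (u y) := fun y => rev_swap a b y
  have h2 : ∀ y, u (Fin.rev y) = Fin.rev (v y) := by
    intro y
    have := rev_swap (Fin.rev a) (Fin.rev b) (x := y)
    rwa [Fin.rev_rev, Fin.rev_rev] at this
  have hcomm : (u * v) x = (v * u) x := by rw [hc.eq]
  simp only [Equiv.Perm.mul_apply] at hcomm ⊢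
  rw [h1 x, h2 (u x), ← hcomm]
  simp [Fin.rev_rev]

lemma swap_commute {M : ℕ} (a b c d : Fin M) (h1 : a ≠ c) (h2 : a ≠ d)
    (h3 : b ≠ c) (h4 : b ≠ d) :
    Commute (Equiv.swap a b) (Equiv.swap c d) := by
  have key : ∀ x, Equiv.swap a b (Equiv.swap c d x) = Equiv.swap c d (Equiv.swap a b x) := by
    intro x
    rcases eq_or_ne x a with rfl | hxa
    · rw [Equiv.swap_apply_of_ne_of_ne h1 h2, Equiv.swap_apply_left,
        Equiv.swap_apply_of_ne_of_ne h3 h4]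
    · rcases eq_or_ne x b with rfl | hxb
      · rw [Equiv.swap_apply_of_ne_of_ne h3 h4, Equiv.swap_apply_right,
          Equiv.swap_apply_of_ne_of_ne h1 h2]
      · rcases eq_or_ne x c with rfl | hxc
        · rw [Equiv.swap_apply_left, Equiv.swap_apply_of_ne_of_ne (Ne.symm h2) (Ne.symm h4),
            Equiv.swap_apply_of_ne_of_ne (Ne.symm h1) (Ne.symm h3), Equiv.swap_apply_left]
        · rcases eq_or_ne x d with rfl | hxd
          · rw [Equiv.swap_apply_right, Equiv.swap_apply_of_ne_of_ne (Ne.symm h1) (Ne.symm h3),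
              Equiv.swap_apply_of_ne_of_ne (Ne.symm h2) (Ne.symm h4), Equiv.swap_apply_right]
          · rw [Equiv.swap_apply_of_ne_of_ne hxc hxd, Equiv.swap_apply_of_ne_of_ne hxa hxb,
              Equiv.swap_apply_of_ne_of_ne hxc hxd]
  exact Equiv.ext key

variable (n : ℕ) (hn : 0 < n)

/-- The set counted by `m_w`. -/
def mset (w : Perm (Fin (2*n))) : Finset (Fin (2*n)) :=
  Finset.univ.filter fun i => (i : ℕ) < n ∧ n ≤ ((w i : Fin (2*n)) : ℕ)

def mcount (w : Perm (Fin (2*n))) : ℕ := (mset n w).card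

lemma mcount_one : mcount n 1 = 0 := by
  rw [mcount, Finset.card_eq_zero, mset]
  ext i
  simp only [Finset.mem_filter, Finset.mem_univ, true_and, Finset.notMem_empty, iff_false,
    not_and, not_le]
  intro h; simp only [Equiv.Perm.one_apply]
  omega

lemma mcount_swap_same {a b : Fin (2*n)}
    (h : ((a:ℕ) < n ∧ (b:ℕ) < n) ∨ (n ≤ (a:ℕ) ∧ n ≤ (b:ℕ))) (w : Perm (Fin (2*n))) :
    mcount n (Equiv.swap a b * w) = mcount n w := by
  unfold mcount mset
  congr 1
  apply Finset.filter_congr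
  intro i _
  simp only [Equiv.Perm.mul_apply]
  rcases eq_or_ne (w i) a with h' | h'
  · rw [h', Equiv.swap_apply_left]
    constructor <;> rintro ⟨u1, u2⟩ <;> exact ⟨u1, by omega⟩
  · rcases eq_or_ne (w i) b with h'' | h''
    · rw [h'', Equiv.swap_apply_right]
      constructor <;> rintro ⟨u1, u2⟩ <;> exact ⟨u1, by omega⟩
    · rw [Equiv.swap_apply_of_ne_of_ne h' h'']

lemma mcount_swap_le {a b : Fin (2*n)} (hb : n ≤ (b:ℕ)) (w : Perm (Fin (2*n))) :
    mcount n (Equiv.swap a b * w) ≤ mcount n w + 1 := by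
  have hsub : mset n (Equiv.swap a b * w) ⊆ insert (w⁻¹ a) (mset n w) := by
    intro i hi
    simp only [mset, Finset.mem_filter, Finset.mem_univ, true_and] at hi
    simp only [Equiv.Perm.mul_apply] at hi
    rcases eq_or_ne i (w⁻¹ a) with rfl | hia
    · exact Finset.mem_insert_self _ _
    · apply Finset.mem_insert_of_mem
      simp only [mset, Finset.mem_filter, Finset.mem_univ, true_and]
      have hwa : w i ≠ a := fun h => hia (by rw [← h]; simp)
      rcases eq_or_ne (w i) b with h'' | h''
      · exact ⟨hi.1, by rw [h'']; exact hb⟩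
      · rw [Equiv.swap_apply_of_ne_of_ne hwa h''] at hi
        exact hi
  calc mcount n (Equiv.swap a b * w) ≤ (insert (w⁻¹ a) (mset n w)).card :=
        Finset.card_le_card hsub
    _ ≤ mcount n w + 1 := Finset.card_insert_le _ _

lemma mcount_swap_dec {a b : Fin (2*n)} (ha : (a:ℕ) < n) (hb : n ≤ (b:ℕ))
    (w : Perm (Fin (2*n)))
    (hq : ((w⁻¹ b : Fin (2*n)) : ℕ) < n) (hp : n ≤ ((w⁻¹ a : Fin (2*n)) : ℕ)) :
    mcount n w = mcount n (Equiv.swap a b * w) + 1 := by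
  have hkey : mset n w = insert (w⁻¹ b) (mset n (Equiv.swap a b * w)) := by
    ext i
    simp only [mset, Finset.mem_filter, Finset.mem_univ, true_and, Finset.mem_insert]
    simp only [Equiv.Perm.mul_apply]
    constructor
    · rintro ⟨h1, h2⟩
      rcases eq_or_ne i (w⁻¹ b) with rfl | hib
      · exact Or.inl rfl
      · right
        refine ⟨h1, ?_⟩
        have hwb : w i ≠ b := fun h => hib (by rw [← h]; simp)
        have hwa : w i ≠ a := by
          intro h
          have : i = w⁻¹ a := by rw [← h]; simp
          rw [this] at h1; omega
        rw [Equiv.swap_apply_of_ne_of_ne hwa hwb]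
        exact h2
    · rintro (rfl | ⟨h1, h2⟩)
      · exact ⟨hq, by simp [hb]⟩
      · refine ⟨h1, ?_⟩
        have hwa : w i ≠ a := by
          intro h
          have : i = w⁻¹ a := by rw [← h]; simp
          rw [this] at h1; omega
        have hwb : w i ≠ b := by
          intro h
          rw [h, Equiv.swap_apply_right] at h2; omega
        rw [Equiv.swap_apply_of_ne_of_ne hwa hwb] at h2
        exact h2
  have hnotmem : w⁻¹ b ∉ mset n (Equiv.swap a b * w) := by
    simp only [mset, Finset.mem_filter, Finset.mem_univ, true_and, not_and, not_le]
    simp only [Equiv.Perm.mul_apply, Equiv.Perm.apply_inv_self, Equiv.swap_apply_right]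
    intro _
    exact ha
  rw [mcount, mcount, hkey, Finset.card_insert_of_notMem hnotmem]

end C


section Cfinal

variable (n : ℕ) (hn : 0 < n)

lemma vrev {M : ℕ} (x : Fin M) : ((Fin.rev x : Fin M) : ℕ) = M - 1 - (x : ℕ) := by
  rw [Fin.val_rev]; omega

lemma rr_eq' (j : ℕ) (h1 : 1 ≤ j) (h2 : j ≤ 2*n - 1) (a b : Fin (2*n))
    (ha : (a:ℕ) = j - 1) (hb : (b:ℕ) = j) : rr n hn j = Equiv.swap a b := by
  rw [rr_eq n hn j h1 h2]
  congr 1 <;> simp only [Fin.ext_iff] <;> omega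

lemma genC_step_le (s : Perm (Fin (2*n))) (hs : s ∈ genC n hn) (w : Perm (Fin (2*n))) :
    invN (s * w) + mcount n (s * w) ≤ invN w + mcount n w + 2 := by
  rcases hs with ⟨i, hi1, hi2, hseq⟩ | hseq
  · -- s = rr i * rr (2n - i)
    have hu : rr n hn i = Equiv.swap (⟨i-1, by omega⟩ : Fin (2*n)) ⟨i, by omega⟩ :=
      rr_eq' n hn i hi1 (by omega) _ _ rfl rfl
    have hv : rr n hn (2*n - i)
        = Equiv.swap (⟨2*n-i-1, by omega⟩ : Fin (2*n)) ⟨2*n-i, by omega⟩ :=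
      rr_eq' n hn (2*n - i) (by omega) (by omega) _ _ (by simp) rfl
    have hassoc : s * w = rr n hn i * (rr n hn (2*n - i) * w) := by
      rw [hseq, mul_assoc]
    have e1 : invN (rr n hn (2*n-i) * w) ≤ invN w + 1 := by
      rw [hv]; exact invN_swap_mul_le (by simp; omega) w
    have e2 : invN (rr n hn i * (rr n hn (2*n-i) * w)) ≤ invN (rr n hn (2*n-i) * w) + 1 := by
      rw [hu]; exact invN_swap_mul_le (by simp; omega) _
    have m1 : mcount n (rr n hn (2*n-i) * w) = mcount n w := by
      rw [hv]; exact mcount_swap_same n (Or.inr ⟨by simp; omega, by simp; omega⟩) w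
    have m2 : mcount n (rr n hn i * (rr n hn (2*n-i) * w))
        = mcount n (rr n hn (2*n-i) * w) := by
      rw [hu]; exact mcount_swap_same n (Or.inl ⟨by simp; omega, by simp; omega⟩) _
    rw [hassoc]
    omega
  · -- s = rr n
    have hu : rr n hn n = Equiv.swap (⟨n-1, by omega⟩ : Fin (2*n)) ⟨n, by omega⟩ :=
      rr_eq' n hn n (by omega) (by omega) _ _ rfl rfl
    have e1 : invN (s * w) ≤ invN w + 1 := by
      rw [hseq, hu]; exact invN_swap_mul_le (by simp; omega) w
    have m1 : mcount n (s * w) ≤ mcount n w + 1 := by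
      rw [hseq, hu]; exact mcount_swap_le n (by simp) w
    omega

lemma C_lower : ∀ L : List (Perm (Fin (2*n))), (∀ x ∈ L, x ∈ genC n hn) →
    invN L.prod + mcount n L.prod ≤ 2 * L.length := by
  intro L
  induction L with
  | nil => simp [invN_one, mcount_one]
  | cons s L ih =>
    intro hL
    have hrec := ih (fun x hx => hL x (by simp [hx]))
    have := genC_step_le n hn s (hL s (by simp)) L.prod
    rw [List.prod_cons]
    simp only [List.length_cons]
    omega

lemma descent_rev (w : Perm (Fin (2*n))) (hw : PSymm w) (k : ℕ) (hk : k + 1 < 2*n)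
    (hd : w⁻¹ ⟨k+1, hk⟩ < w⁻¹ ⟨k, by omega⟩) :
    w⁻¹ ⟨2*n-k-1, by omega⟩ < w⁻¹ ⟨2*n-k-2, by omega⟩ := by
  have e1 : (⟨2*n-k-1, by omega⟩ : Fin (2*n)) = Fin.rev ⟨k, by omega⟩ := by
    simp only [Fin.ext_iff, vrev]; omega
  have e2 : (⟨2*n-k-2, by omega⟩ : Fin (2*n)) = Fin.rev ⟨k+1, hk⟩ := by
    simp only [Fin.ext_iff, vrev]; omega
  rw [e1, e2, hw.inv_rev, hw.inv_rev, Fin.rev_lt_rev]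
  exact hd

lemma C_dec (w : Perm (Fin (2*n))) (hw : PSymm w) (h1 : w ≠ 1) :
    ∃ s ∈ genC n hn, s * (s * w) = w ∧ PSymm (s * w) ∧
      invN (s * w) + mcount n (s * w) + 2 = invN w + mcount n w := by
  have hnorm : ∃ k, ∃ (hk : k + 1 < 2*n), k < n ∧ w⁻¹ ⟨k+1, hk⟩ < w⁻¹ ⟨k, by omega⟩ := by
    obtain ⟨k, hk, hd⟩ := exists_descent w h1
    rcases Nat.lt_or_ge k n with h | h
    · exact ⟨k, hk, h, hd⟩
    · refine ⟨2*n-k-2, by omega, by omega, ?_⟩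
      have := descent_rev n w hw k hk hd
      have e1 : (⟨2*n-k-2+1, by omega⟩ : Fin (2*n)) = ⟨2*n-k-1, by omega⟩ := by
        simp only [Fin.ext_iff]; omega
      rw [e1]
      exact this
  obtain ⟨k, hk, hkn, hd⟩ := hnorm
  by_cases hcase : k + 1 = n
  · -- s = rr n
    set a : Fin (2*n) := ⟨n-1, by omega⟩
    set b : Fin (2*n) := ⟨n, by omega⟩
    have hu : rr n hn n = Equiv.swap a b := rr_eq' n hn n (by omega) (by omega) _ _ rfl rfl
    have ea : a = (⟨k, by omega⟩ : Fin (2*n)) := by simp only [a, Fin.ext_iff]; omega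
    have eb : b = (⟨k+1, hk⟩ : Fin (2*n)) := by simp only [b, Fin.ext_iff]; omega
    have hd' : w⁻¹ b < w⁻¹ a := by rw [ea, eb]; exact hd
    have hrev : b = Fin.rev a := by simp only [a, b, Fin.ext_iff, vrev]; omega
    have hinv : invN w = invN (rr n hn n * w) + 1 := by
      rw [hu]
      exact invN_swap_mul_dec (by simp [a, b]; omega) w hd'
    have hqrev : w⁻¹ b = Fin.rev (w⁻¹ a) := by rw [hrev, hw.inv_rev]
    have hp : n ≤ ((w⁻¹ a : Fin (2*n)) : ℕ) := by
      have hlt := hd'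
      rw [Fin.lt_def, hqrev, vrev] at hlt
      omega
    have hq : ((w⁻¹ b : Fin (2*n)) : ℕ) < n := by
      rw [hqrev, vrev]; omega
    have hmc : mcount n w = mcount n (rr n hn n * w) + 1 := by
      rw [hu]
      exact mcount_swap_dec n (by simp [a]; omega) (by simp [b]) w hq hp
    refine ⟨rr n hn n, Or.inr rfl, ?_, ?_, by omega⟩
    · rw [hu, ← mul_assoc, Equiv.swap_mul_self, one_mul]
    · apply PSymm.mul _ hw
      rw [hu, hrev]
      exact psymm_swap_rev a
  · -- s = rr (k+1) * rr (2n-k-1)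
    have hkn2 : k + 1 ≤ n - 1 := by omega
    set A : Fin (2*n) := ⟨k, by omega⟩
    set B : Fin (2*n) := ⟨k+1, hk⟩
    set C : Fin (2*n) := ⟨2*n-k-2, by omega⟩
    set D : Fin (2*n) := ⟨2*n-k-1, by omega⟩
    have hu : rr n hn (k+1) = Equiv.swap A B :=
      rr_eq' n hn (k+1) (by omega) (by omega) _ _ (by simp [A]) (by simp [B])
    have hv : rr n hn (2*n - (k+1)) = Equiv.swap C D :=
      rr_eq' n hn (2*n - (k+1)) (by omega) (by omega) _ _ (by simp [C]; omega)
        (by simp [D]; omega)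
    have hcom : Commute (Equiv.swap A B) (Equiv.swap C D) := by
      apply swap_commute <;> simp only [A, B, C, D, ne_eq, Fin.ext_iff] <;> omega
    set s := rr n hn (k+1) * rr n hn (2*n - (k+1)) with hs
    have hmem : s ∈ genC n hn := Or.inl ⟨k+1, by omega, hkn2, rfl⟩
    have hsq : s * s = 1 := by
      rw [hs, hu, hv, Commute.mul_mul_mul_comm hcom.symm, Equiv.swap_mul_self,
        Equiv.swap_mul_self, one_mul]
    have hDrev : D = Fin.rev A := by simp only [A, D, Fin.ext_iff, vrev]; omega
    have hCrev : C = Fin.rev B := by simp only [B, C, Fin.ext_iff, vrev]; omega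
    have hpsym : PSymm s := by
      have hCD : Equiv.swap C D = Equiv.swap (Fin.rev A) (Fin.rev B) := by
        rw [← hDrev, ← hCrev, Equiv.swap_comm]
      rw [hs, hu, hv, hCD]
      exact psymm_swap_pair A B (by rw [← hCD]; exact hcom)
    -- inversion/mcount chain
    have hd2 : w⁻¹ D < w⁻¹ C := descent_rev n w hw k hk hd
    have hinv1 : invN w = invN (Equiv.swap C D * w) + 1 :=
      invN_swap_mul_dec (by simp [C, D]; omega) w hd2
    have hmc1 : mcount n (Equiv.swap C D * w) = mcount n w :=
      mcount_swap_same n (Or.inr ⟨by simp [C]; omega, by simp [D]; omega⟩) w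
    have hfixA : Equiv.swap C D A = A := by
      apply Equiv.swap_apply_of_ne_of_ne <;> simp only [A, C, D, ne_eq, Fin.ext_iff] <;> omega
    have hfixB : Equiv.swap C D B = B := by
      apply Equiv.swap_apply_of_ne_of_ne <;> simp only [B, C, D, ne_eq, Fin.ext_iff] <;> omega
    have hinvCD : ∀ x : Fin (2*n), (Equiv.swap C D * w)⁻¹ x = w⁻¹ (Equiv.swap C D x) := by
      intro x
      simp [mul_inv_rev, Equiv.swap_inv]
    have hd3 : (Equiv.swap C D * w)⁻¹ B < (Equiv.swap C D * w)⁻¹ A := by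
      rw [hinvCD, hinvCD, hfixA, hfixB]
      exact hd
    have hinv2 : invN (Equiv.swap C D * w)
        = invN (Equiv.swap A B * (Equiv.swap C D * w)) + 1 :=
      invN_swap_mul_dec (by simp [A, B]) _ hd3
    have hmc2 : mcount n (Equiv.swap A B * (Equiv.swap C D * w))
        = mcount n (Equiv.swap C D * w) :=
      mcount_swap_same n (Or.inl ⟨by simp [A]; omega, by simp [B]; omega⟩) _
    have hassoc : s * w = Equiv.swap A B * (Equiv.swap C D * w) := by
      rw [hs, hu, hv, mul_assoc]
    refine ⟨s, hmem, ?_, PSymm.mul hpsym hw, ?_⟩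
    · rw [← mul_assoc, hsq, one_mul]
    · rw [hassoc]; omega

lemma C_upper : ∀ N : ℕ, ∀ w : Perm (Fin (2*n)), PSymm w → invN w + mcount n w = N →
    ∃ L : List (Perm (Fin (2*n))), (∀ x ∈ L, x ∈ genC n hn) ∧ L.prod = w ∧
      2 * L.length = invN w + mcount n w := by
  intro N
  induction N using Nat.strong_induction_on with
  | _ N ih =>
    intro w hw hN
    rcases eq_or_ne w 1 with rfl | h1
    · exact ⟨[], by simp, by simp, by simp [invN_one, mcount_one]⟩
    · obtain ⟨s, hmem, hss, hsym, harith⟩ := C_dec n hn w hw h1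
      obtain ⟨L', hL'1, hL'2, hL'3⟩ :=
        ih (invN (s*w) + mcount n (s*w)) (by omega) (s*w) hsym rfl
      refine ⟨s :: L', ?_, ?_, ?_⟩
      · intro x hx
        rcases List.mem_cons.mp hx with rfl | hx'
        · exact hmem
        · exact hL'1 x hx'
      · rw [List.prod_cons, hL'2, hss]
      · simp only [List.length_cons]; omega

end Cfinal

theorem stmt14 (n : ℕ) (hn : 0 < n) (w : Equiv.Perm (Fin (2 * n)))
    (hw : ∀ i, w i = Fin.rev (w (Fin.rev i))) :
    2 * wordLength (genC n hn) w
      = wordLength (genA n hn) w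
        + (Finset.univ.filter fun i : Fin (2 * n) =>
            (i : ℕ) < n ∧ n ≤ (w i : ℕ)).card := by
  have hw' : PSymm w := hw
  obtain ⟨L, hmem, hprod, hlen⟩ := C_upper n hn (invN w + mcount n w) w hw' rfl
  have hwl : wordLength (genC n hn) w = L.length := by
    refine wordLength_eq_of _ _ _ L hmem hprod rfl ?_
    intro L' hm hp
    have := C_lower n hn L' hm
    rw [hp] at this
    omega
  have hcard : (Finset.univ.filter fun i : Fin (2 * n) =>
      (i : ℕ) < n ∧ n ≤ (w i : ℕ)).card = mcount n w := rfl
  rw [hwl, wordLength_genA n hn w, hcard]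
  omega
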